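/- Let X be a set whose cardinality is finite, not prime, and not equal to 4 (or X infinite). Then the group homomorphism Γ from the symmetric group on X to the automorphism group of Fact X, given by (Γα)(θ₁, θ₂) = (αθ₁, αθ₂), is injective. -/

import Mathlib

/-- A pair `(θ, φ)` of equivalence relations on `X` is a factor pair if the natural map
`X → X/θ × X/φ` is a bijection. -/
def IsFactorPair {X : Type*} (θ φ : Setoid X) : Prop :=
  Function.Bijective (fun x : X => (Quotient.mk θ x, Quotient.mk φ x))

/-- The image `αθ = {(αx, αy) : (x,y) ∈ θ}` of an equivalence relation under a permutation. -/
def permSetoid {X : Type*} (α : Equiv.Perm X) (θ : Setoid X) : Setoid X :=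
  Setoid.comap α.symm θ

open Function

/-- Complements of finite equinumerous subsets are equinumerous. -/
lemma aux_compl_equiv {X : Type*} {s t : Set X} (hs : s.Finite) (ht : t.Finite)
    (e : s ≃ t) : Nonempty ((↥sᶜ) ≃ (↥tᶜ)) := by
  classical
  cases finite_or_infinite X with
  | inl hfin =>
    have : Fintype X := Fintype.ofFinite X
    refine Fintype.card_eq.mp ?_
    rw [Fintype.card_compl_set, Fintype.card_compl_set, Fintype.card_eq.mpr ⟨e⟩]
  | inr hinf =>
    rw [← Cardinal.eq]
    rw [Cardinal.mk_compl_of_infinite s (hs.lt_aleph0.trans_le (Cardinal.aleph0_le_mk X)),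
      Cardinal.mk_compl_of_infinite t (ht.lt_aleph0.trans_le (Cardinal.aleph0_le_mk X))]

/-- A finite family of distinct points can be sent to any other equinumerous
family of distinct points by a permutation. -/
lemma aux_exists_perm {X : Type*} {k : ℕ} (p q : Fin k → X) (hp : Injective p)
    (hq : Injective q) : ∃ σ : Equiv.Perm X, ∀ i, σ (p i) = q i := by
  classical
  set f : ↥(Set.range p) ≃ ↥(Set.range q) :=
    (Equiv.ofInjective p hp).symm.trans (Equiv.ofInjective q hq) with hf
  obtain ⟨e'⟩ := aux_compl_equiv (Set.finite_range p) (Set.finite_range q) f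
  refine ⟨(Equiv.Set.sumCompl (Set.range p)).symm.trans
    ((Equiv.sumCongr f e').trans (Equiv.Set.sumCompl (Set.range q))), ?_⟩
  intro i
  have hmem : p i ∈ Set.range p := ⟨i, rfl⟩
  have h1 : (Equiv.Set.sumCompl (Set.range p)).symm (p i) = Sum.inl ⟨p i, hmem⟩ :=
    Equiv.Set.sumCompl_symm_apply_of_mem hmem
  simp only [Equiv.trans_apply, h1, Equiv.sumCongr_apply, Sum.map_inl,
    Equiv.Set.sumCompl_apply_inl]
  have h2 : (⟨p i, hmem⟩ : ↥(Set.range p)) = Equiv.ofInjective p hp i := by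
    simp [Equiv.ofInjective_apply]
  have h4 : (Equiv.ofInjective p hp).symm ⟨p i, hmem⟩ = i := by
    rw [h2, Equiv.symm_apply_apply]
  rw [hf]
  simp only [Equiv.trans_apply, h4, Equiv.ofInjective_apply]

/-- Given a product decomposition of `X`, the two coordinate kernels form a factor pair. -/
lemma aux_factor_pair {X R C : Type*} (e : X ≃ R × C) :
    IsFactorPair (Setoid.ker (fun u => (e u).1)) (Setoid.ker (fun u => (e u).2)) := by
  constructor
  · intro u v huv
    rw [Prod.mk.injEq] at huv
    have h1 : (e u).1 = (e v).1 := Quotient.eq.mp huv.1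
    have h2 : (e u).2 = (e v).2 := Quotient.eq.mp huv.2
    have : e u = e v := Prod.ext h1 h2
    exact e.injective this
  · rintro ⟨q1, q2⟩
    induction q1 using Quotient.inductionOn with
    | h u =>
    induction q2 using Quotient.inductionOn with
    | h v =>
    refine ⟨e.symm ((e u).1, (e v).2), ?_⟩
    rw [Prod.mk.injEq]
    constructor
    · exact Quotient.sound (by show _ = _; simp)
    · exact Quotient.sound (by show _ = _; simp)

lemma inj3 {X : Type*} {a b c : X} (hab : a ≠ b) (hac : a ≠ c) (hbc : b ≠ c) :
    Injective ![a, b, c] := by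
  intro i j hij
  fin_cases i <;> fin_cases j <;>
    simp only [Matrix.cons_val_zero, Matrix.cons_val_one, Matrix.head_cons,
      Matrix.cons_val_two, Matrix.tail_cons] at hij <;>
    first
      | rfl
      | exact absurd hij hab | exact absurd hij.symm hab
      | exact absurd hij hac | exact absurd hij.symm hac
      | exact absurd hij hbc | exact absurd hij.symm hbc

lemma inj4 {X : Type*} {a b c d : X} (hab : a ≠ b) (hac : a ≠ c) (had : a ≠ d)
    (hbc : b ≠ c) (hbd : b ≠ d) (hcd : c ≠ d) : Injective ![a, b, c, d] := by
  intro i j hij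
  fin_cases i <;> fin_cases j <;>
    simp only [Matrix.cons_val_zero, Matrix.cons_val_one, Matrix.head_cons,
      Matrix.cons_val_two, Matrix.cons_val_three, Matrix.tail_cons] at hij <;>
    first
      | rfl
      | exact absurd hij hab | exact absurd hij.symm hab
      | exact absurd hij hac | exact absurd hij.symm hac
      | exact absurd hij had | exact absurd hij.symm had
      | exact absurd hij hbc | exact absurd hij.symm hbc
      | exact absurd hij hbd | exact absurd hij.symm hbd
      | exact absurd hij hcd | exact absurd hij.symm hcd

/-- Core combinatorial lemma: a nontrivial permutation preserving all factor pairs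
is impossible when `X` decomposes as `R × C` with `|R| ≥ 2`, `|C| ≥ 3`. -/
lemma aux_core {X R C : Type*} (γ : Equiv.Perm X)
    (pres : ∀ θ φ : Setoid X, IsFactorPair θ φ → ∀ u v : X, θ u v ↔ θ (γ u) (γ v))
    (e₀ : X ≃ R × C) (r1 r2 : R) (hr : r1 ≠ r2)
    (c1 c2 c3 : C) (h12 : c1 ≠ c2) (h13 : c1 ≠ c3) (h23 : c2 ≠ c3)
    (x : X) (hx : γ x ≠ x) : False := by
  classical
  set y := γ x with hy
  -- find z distinct from x and y
  have hz : ∃ z : X, z ≠ x ∧ z ≠ y := by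
    by_contra hcon
    push_neg at hcon
    set p1 := e₀.symm (r1, c1)
    set p2 := e₀.symm (r1, c2)
    set p3 := e₀.symm (r1, c3)
    have d12 : p1 ≠ p2 := fun hh => h12 (by simpa [p1, p2] using congrArg (fun u => (e₀ u).2) hh)
    have d13 : p1 ≠ p3 := fun hh => h13 (by simpa [p1, p3] using congrArg (fun u => (e₀ u).2) hh)
    have d23 : p2 ≠ p3 := fun hh => h23 (by simpa [p2, p3] using congrArg (fun u => (e₀ u).2) hh)
    rcases eq_or_ne p1 x with hp1 | hp1
    · rcases eq_or_ne p2 x with hp2 | hp2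
      · exact d12 (hp1.trans hp2.symm)
      · rcases eq_or_ne p3 x with hp3 | hp3
        · exact d13 (hp1.trans hp3.symm)
        · exact d23 ((hcon p2 hp2).trans (hcon p3 hp3).symm)
    · rcases eq_or_ne p2 x with hp2 | hp2
      · rcases eq_or_ne p3 x with hp3 | hp3
        · exact d23 (hp2.trans hp3.symm)
        · exact d13 ((hcon p1 hp1).trans (hcon p3 hp3).symm)
      · exact d12 ((hcon p1 hp1).trans (hcon p2 hp2).symm)
  obtain ⟨z, hzx, hzy⟩ := hz
  set w := γ z with hw
  have hwy : w ≠ y := fun hh => hzx (γ.injective hh)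
  -- helper to finish given a suitable permutation
  have finish : ∀ σ : Equiv.Perm X,
      (e₀ (σ x)).1 = r1 → (e₀ (σ z)).1 = r1 → (e₀ (σ w)).1 = r1 → (e₀ (σ y)).1 = r2 →
      False := by
    intro σ hσx hσz hσw hσy
    set e : X ≃ R × C := Equiv.trans σ e₀ with he
    have hfp := aux_factor_pair e
    have hxz : (Setoid.ker (fun u => (e u).1)) x z := by
      show (e x).1 = (e z).1
      simp only [he, Equiv.trans_apply]
      rw [hσx, hσz]
    have := (pres _ _ hfp x z).mp hxz
    have hyw : (e y).1 = (e w).1 := this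
    simp only [he, Equiv.trans_apply] at hyw
    rw [hσy, hσw] at hyw
    exact hr hyw.symm
  -- choose targets
  set P11 := e₀.symm (r1, c1)
  set P12 := e₀.symm (r1, c2)
  set P13 := e₀.symm (r1, c3)
  set P21 := e₀.symm (r2, c1)
  have hP12 : P11 ≠ P12 := e₀.symm.injective.ne (fun hh => h12 (congrArg Prod.snd hh))
  have hP13 : P11 ≠ P13 := e₀.symm.injective.ne (fun hh => h13 (congrArg Prod.snd hh))
  have hP23 : P12 ≠ P13 := e₀.symm.injective.ne (fun hh => h23 (congrArg Prod.snd hh))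
  have hP1 : P11 ≠ P21 := e₀.symm.injective.ne (fun hh => hr (congrArg Prod.fst hh))
  have hP2 : P12 ≠ P21 := e₀.symm.injective.ne (fun hh => hr (congrArg Prod.fst hh))
  have hP3 : P13 ≠ P21 := e₀.symm.injective.ne (fun hh => hr (congrArg Prod.fst hh))
  have hrow : ∀ cc : C, (e₀ (e₀.symm (r1, cc))).1 = r1 := fun cc => by simp
  have hrow2 : (e₀ (e₀.symm (r2, c1))).1 = r2 := by simp
  rcases eq_or_ne w x with hwx | hwx
  · obtain ⟨σ, hσ⟩ := aux_exists_perm ![x, z, y] ![P11, P12, P21]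
      (inj3 (Ne.symm hzx) (Ne.symm hx) hzy) (inj3 hP12 hP1 hP2)
    have e0 := hσ 0; have e1 := hσ 1; have e2 := hσ 2
    simp only [Matrix.cons_val_zero, Matrix.cons_val_one, Matrix.head_cons,
      Matrix.cons_val_two, Matrix.tail_cons] at e0 e1 e2
    refine finish σ ?_ ?_ ?_ ?_
    · rw [e0]; exact hrow c1
    · rw [e1]; exact hrow c2
    · rw [hwx, e0]; exact hrow c1
    · rw [e2]; exact hrow2
  · rcases eq_or_ne w z with hwz | hwz
    · obtain ⟨σ, hσ⟩ := aux_exists_perm ![x, z, y] ![P11, P12, P21]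
        (inj3 (Ne.symm hzx) (Ne.symm hx) hzy) (inj3 hP12 hP1 hP2)
      have e0 := hσ 0; have e1 := hσ 1; have e2 := hσ 2
      simp only [Matrix.cons_val_zero, Matrix.cons_val_one, Matrix.head_cons,
        Matrix.cons_val_two, Matrix.tail_cons] at e0 e1 e2
      refine finish σ ?_ ?_ ?_ ?_
      · rw [e0]; exact hrow c1
      · rw [e1]; exact hrow c2
      · rw [hwz, e1]; exact hrow c2
      · rw [e2]; exact hrow2
    · obtain ⟨σ, hσ⟩ := aux_exists_perm ![x, z, w, y] ![P11, P12, P13, P21]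
        (inj4 (Ne.symm hzx) (Ne.symm hwx) (Ne.symm hx) (Ne.symm hwz) hzy hwy)
        (inj4 hP12 hP13 hP1 hP23 hP2 hP3)
      have e0 := hσ 0; have e1 := hσ 1; have e2 := hσ 2; have e3 := hσ 3
      simp only [Matrix.cons_val_zero, Matrix.cons_val_one, Matrix.head_cons,
        Matrix.cons_val_two, Matrix.cons_val_three, Matrix.tail_cons] at e0 e1 e2 e3
      refine finish σ ?_ ?_ ?_ ?_
      · rw [e0]; exact hrow c1
      · rw [e1]; exact hrow c2
      · rw [e2]; exact hrow c3
      · rw [e3]; exact hrow2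

/-- A composite number other than 4 factors as `a * b` with `a ≥ 2`, `b ≥ 3`. -/
lemma aux_factorization {n : ℕ} (h2 : 2 ≤ n) (hnp : ¬ n.Prime) (h4 : n ≠ 4) :
    ∃ a b : ℕ, 2 ≤ a ∧ 3 ≤ b ∧ n = a * b := by
  have hn1 : n ≠ 1 := by omega
  have hp : n.minFac.Prime := Nat.minFac_prime hn1
  have hdvd : n.minFac ∣ n := Nat.minFac_dvd n
  obtain ⟨m, hm⟩ := hdvd
  refine ⟨n.minFac, m, hp.two_le, ?_, hm⟩
  have hm1 : m ≠ 1 := by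
    rintro rfl
    rw [mul_one] at hm
    exact hnp (hm ▸ hp)
  have hm0 : m ≠ 0 := by
    rintro rfl
    omega
  by_contra hcon
  push_neg at hcon
  have hm2 : m = 2 := by omega
  subst hm2
  have hle : n.minFac ≤ 2 := Nat.minFac_le_of_dvd (by omega) ⟨n.minFac, by omega⟩
  have h2' : 2 ≤ n.minFac := hp.two_le
  omega

/-- If `|X|` is neither prime nor 4 (in particular if `X` is infinite), the action
`Γ` of permutations of `X` on factor pairs is injective. -/
theorem stmt_13 {X : Type*} (hX : Finite X → ¬ (Nat.card X).Prime ∧ Nat.card X ≠ 4)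
    (α β : Equiv.Perm X)
    (h : ∀ θ φ : Setoid X, IsFactorPair θ φ →
        (permSetoid α θ, permSetoid α φ) = (permSetoid β θ, permSetoid β φ)) :
    α = β := by
  classical
  set γ : Equiv.Perm X := α.trans β.symm with hγ
  have pres : ∀ θ φ : Setoid X, IsFactorPair θ φ → ∀ u v : X, θ u v ↔ θ (γ u) (γ v) := by
    intro θ φ hfp u v
    have h1 := congrArg Prod.fst (h θ φ hfp)
    have h1' : ∀ a b : X, θ (α.symm a) (α.symm b) ↔ θ (β.symm a) (β.symm b) := by
      intro a b
      have := Setoid.ext_iff.mp h1 a b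
      exact this
    have := h1' (α u) (α v)
    simpa [hγ] using this
  by_contra hne
  have : ∃ x : X, γ x ≠ x := by
    by_contra hcon
    push_neg at hcon
    apply hne
    ext u
    have := hcon u
    simp only [hγ, Equiv.trans_apply] at this
    have := congrArg β this
    simpa using this
  obtain ⟨x, hx⟩ := this
  cases finite_or_infinite X with
  | inl hfin =>
    have hcards := hX hfin
    have h2 : 2 ≤ Nat.card X := by
      have : Nontrivial X := ⟨γ x, x, hx⟩
      exact Finite.one_lt_card
    obtain ⟨a, b, ha, hb, hab⟩ := aux_factorization h2 hcards.1 hcards.2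
    have : Fintype X := Fintype.ofFinite X
    have hcard : Fintype.card X = Fintype.card (Fin a × Fin b) := by
      rw [Fintype.card_prod, Fintype.card_fin, Fintype.card_fin]
      rw [← Nat.card_eq_fintype_card, hab]
    have e₀ : X ≃ Fin a × Fin b := Fintype.equivOfCardEq hcard
    exact aux_core γ pres e₀ ⟨0, by omega⟩ ⟨1, by omega⟩ (by simp)
      ⟨0, by omega⟩ ⟨1, by omega⟩ ⟨2, by omega⟩ (by simp) (by simp) (by simp) x hx
  | inr hinf =>
    have hmul : Cardinal.mk (X × X) = Cardinal.mk X := by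
      rw [Cardinal.mk_prod]
      simp only [Cardinal.lift_id]
      exact Cardinal.mul_eq_self (Cardinal.aleph0_le_mk X)
    obtain ⟨e'⟩ := Cardinal.eq.mp hmul
    let f : ℕ ↪ X := Infinite.natEmbedding X
    exact aux_core γ pres e'.symm (f 0) (f 1) (by simp [f.injective.ne_iff]) (f 0) (f 1) (f 2)
      (by simp [f.injective.ne_iff]) (by simp [f.injective.ne_iff]) (by simp [f.injective.ne_iff]) x hx
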